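/- If each ψ_A(x) is an eigenvector of ∂_μ H(x) with a common eigenvalue λ_μ(x) (i.e. (∂_μ H)(x) ψ_A(x) = λ_μ(x) ψ_A(x) for all A), then the effective Hamiltonian matrix satisfies ∂_μ E(x) + [A_μ(x), E(x)] = λ_μ(x) · Id_N. -/

import Mathlib

open Matrix

attribute [local instance] Matrix.linftyOpNormedRing Matrix.linftyOpNormedAlgebra

/-- If each `ψ A x` is an eigenvector of `∂H x` with a common eigenvalue `λ x`, then
the effective Hamiltonian matrix satisfies `∂E + [𝒜, E] = λ • Id`. -/
theorem effective_hamiltonian_geometric_coinvariant {n N : ℕ}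
    (H H' : ℝ → Matrix (Fin n) (Fin n) ℂ)
    (ψ ψ' : Fin N → ℝ → (Fin n → ℂ))
    (lam : ℝ → ℝ) (hlam : Continuous lam)
    (hHerm : ∀ t, (H t)ᴴ = H t)
    (hH : ∀ t, HasDerivAt H (H' t) t)
    (hψ : ∀ A t, HasDerivAt (ψ A) (ψ' A t) t)
    (horth : ∀ t (A B : Fin N),
      star (ψ A t) ⬝ᵥ ψ B t = if A = B then 1 else 0)
    (E 𝒜 : ℝ → Matrix (Fin N) (Fin N) ℂ)
    (hE : ∀ t A B, E t A B = star (ψ A t) ⬝ᵥ (H t).mulVec (ψ B t))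
    (h𝒜 : ∀ t A B, 𝒜 t A B = star (ψ A t) ⬝ᵥ ψ' B t)
    (hinvariant : ∀ t (B : Fin N),
      (H t).mulVec (ψ B t) = ∑ C, E t C B • ψ C t)
    (heig : ∀ t (A : Fin N), (H' t).mulVec (ψ A t) = (lam t : ℂ) • ψ A t)
    (t₀ : ℝ) :
    ∀ A B, HasDerivAt (fun t => E t A B)
      (((lam t₀ : ℂ) • (1 : Matrix (Fin N) (Fin N) ℂ)
        - (𝒜 t₀ * E t₀ - E t₀ * 𝒜 t₀)) A B) t₀ := by
  intro A B
  -- entrywise derivatives of H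
  have hHentry : ∀ i j, HasDerivAt (fun s => H s i j) (H' t₀ i j) t₀ := by
    intro i j
    let e : Matrix (Fin n) (Fin n) ℂ →ₗ[ℂ] ℂ :=
      { toFun := fun M => M i j
        map_add' := fun _ _ => rfl
        map_smul' := fun _ _ => rfl }
    have := ((LinearMap.toContinuousLinearMap e).restrictScalars ℝ).hasFDerivAt.comp_hasDerivAt
      t₀ (hH t₀)
    exact this
  have hψentry : ∀ A i, HasDerivAt (fun s => ψ A s i) (ψ' A t₀ i) t₀ := fun A i =>
    hasDerivAt_pi.mp (hψ A t₀) i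
  -- derivative of inner products of ψ's
  have hdotψ : ∀ (C D : Fin N), HasDerivAt (fun s => star (ψ C s) ⬝ᵥ ψ D s)
      (star (ψ' C t₀) ⬝ᵥ ψ D t₀ + star (ψ C t₀) ⬝ᵥ ψ' D t₀) t₀ := by
    intro C D
    have : HasDerivAt (fun s => ∑ i, star (ψ C s i) * ψ D s i)
        (∑ i, (star (ψ' C t₀ i) * ψ D t₀ i + star (ψ C t₀ i) * ψ' D t₀ i)) t₀ :=
      HasDerivAt.fun_sum fun i _ => ((hψentry C i).star).mul (hψentry D i)
    simpa [dotProduct, Finset.sum_add_distrib] using this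
  -- the coefficients star ψ' C ⬝ᵥ ψ D = - 𝒜 C D
  have hanti : ∀ (C D : Fin N), star (ψ' C t₀) ⬝ᵥ ψ D t₀ = -(𝒜 t₀ C D) := by
    intro C D
    have hconst : HasDerivAt (fun s => star (ψ C s) ⬝ᵥ ψ D s) 0 t₀ := by
      have : (fun s => star (ψ C s) ⬝ᵥ ψ D s) = fun _ => (if C = D then 1 else 0 : ℂ) :=
        funext fun s => horth s C D
      rw [this]; exact hasDerivAt_const _ _
    have h0 := (hdotψ C D).unique hconst
    rw [h𝒜]
    linear_combination h0
  -- derivative of E A B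
  have hDer : HasDerivAt (fun s => E s A B)
      (star (ψ' A t₀) ⬝ᵥ (H t₀).mulVec (ψ B t₀)
        + star (ψ A t₀) ⬝ᵥ (H' t₀).mulVec (ψ B t₀)
        + star (ψ A t₀) ⬝ᵥ (H t₀).mulVec (ψ' B t₀)) t₀ := by
    have key : HasDerivAt (fun s => ∑ i, star (ψ A s i) * ∑ j, H s i j * ψ B s j)
        (∑ i, (star (ψ' A t₀ i) * ∑ j, H t₀ i j * ψ B t₀ j
          + star (ψ A t₀ i) * ∑ j, (H' t₀ i j * ψ B t₀ j + H t₀ i j * ψ' B t₀ j))) t₀ := by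
      refine HasDerivAt.fun_sum fun i _ => ((hψentry A i).star).mul ?_
      exact HasDerivAt.fun_sum fun j _ => (hHentry i j).mul (hψentry B j)
    have hfun : (fun s => E s A B) = fun s => ∑ i, star (ψ A s i) * ∑ j, H s i j * ψ B s j := by
      funext s
      simp [hE s A B, dotProduct, mulVec]
    rw [hfun]
    convert key using 1
    simp [dotProduct, mulVec, mul_add, Finset.mul_sum, Finset.sum_add_distrib]
    ring
  convert hDer using 1
  -- now the algebra identifying the derivative
  have term2 : star (ψ A t₀) ⬝ᵥ (H' t₀).mulVec (ψ B t₀)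
      = (lam t₀ : ℂ) * (if A = B then 1 else 0) := by
    rw [heig, dotProduct_smul, horth]; simp
  have term1 : star (ψ' A t₀) ⬝ᵥ (H t₀).mulVec (ψ B t₀) = -((𝒜 t₀ * E t₀) A B) := by
    rw [hinvariant]
    have : star (ψ' A t₀) ⬝ᵥ (∑ C, E t₀ C B • ψ C t₀)
        = ∑ C, E t₀ C B * (star (ψ' A t₀) ⬝ᵥ ψ C t₀) := by
      simp only [dotProduct, Pi.star_apply, Finset.sum_apply, Pi.smul_apply, smul_eq_mul,
        Finset.mul_sum]
      rw [Finset.sum_comm]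
      exact Finset.sum_congr rfl fun C _ => Finset.sum_congr rfl fun i _ => by ring
    rw [this]
    simp only [hanti, Matrix.mul_apply]
    simp [mul_comm]
  have hEherm : ∀ C D : Fin N, star (E t₀ C D) = E t₀ D C := by
    intro C D
    rw [hE t₀ C D, hE t₀ D C]
    rw [Matrix.star_dotProduct, star_star, Matrix.star_mulVec, hHerm,
      ← Matrix.dotProduct_mulVec]
  have term3 : star (ψ A t₀) ⬝ᵥ (H t₀).mulVec (ψ' B t₀) = (E t₀ * 𝒜 t₀) A B := by
    have hsw : star (ψ A t₀) ⬝ᵥ (H t₀).mulVec (ψ' B t₀)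
        = star ((H t₀).mulVec (ψ A t₀)) ⬝ᵥ ψ' B t₀ := by
      rw [Matrix.dotProduct_mulVec, Matrix.star_mulVec, hHerm]
    rw [hsw, hinvariant]
    have : star (∑ C, E t₀ C A • ψ C t₀) ⬝ᵥ ψ' B t₀
        = ∑ C, star (E t₀ C A) * (star (ψ C t₀) ⬝ᵥ ψ' B t₀) := by
      simp only [dotProduct, Pi.star_apply, Finset.sum_apply, Pi.smul_apply, smul_eq_mul,
        star_sum, star_mul', Finset.sum_mul, Finset.mul_sum]
      rw [Finset.sum_comm]
      exact Finset.sum_congr rfl fun C _ => Finset.sum_congr rfl fun i _ => by ring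
    rw [this]
    simp only [hEherm, Matrix.mul_apply, h𝒜]
  rw [term1, term2, term3]
  simp [Matrix.sub_apply, Matrix.smul_apply, Matrix.one_apply]
  ring
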